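/- arXiv:1308.3374 — 3 statements merged into one kernel-verified Lean document; each statement's English description precedes it below -/
import Mathlib

section
/- Let C be an m×m Hermitian positive definite complex matrix and let γ > 0 be a real number. Then over all m×m Hermitian positive definite complex matrices Q, the function f(Q) = -γ·log(det Q) - Re(tr(C·Q⁻¹)) (where det Q is a positive real number since Q is Hermitian positive definite) attains its maximum value -γ·log(det(γ⁻¹·C)) - γ·m uniquely at Q = γ⁻¹·C; that is, for every Hermitian positive definite Q one has -γ·log(det Q) - Re(tr(C·Q⁻¹)) ≤ -γ·log(det(γ⁻¹·C)) - γ·m, with equality if and only if Q = γ⁻¹·C. -/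
open Matrix ComplexOrder

-- trace of hermitian matrix equals sum of eigenvalues
lemma trace_eq_sum_eig {n : ℕ} {M : Matrix (Fin n) (Fin n) ℂ} (hM : M.IsHermitian) :
    M.trace = ∑ i, (hM.eigenvalues i : ℂ) := by
  conv_lhs => rw [hM.spectral_theorem, Unitary.conjStarAlgAut_apply]
  rw [trace_mul_cycle,
    show (star (hM.eigenvectorUnitary : Matrix (Fin n) (Fin n) ℂ)) *
      (hM.eigenvectorUnitary : Matrix (Fin n) (Fin n) ℂ) = 1 from
    Unitary.coe_star_mul_self hM.eigenvectorUnitary, Matrix.one_mul]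
  simp [Matrix.trace_diagonal]

lemma key {n : ℕ} {M : Matrix (Fin n) (Fin n) ℂ} (hM : M.PosDef) :
    Real.log M.det.re ≤ M.trace.re - n ∧
      (Real.log M.det.re = M.trace.re - n ↔ M = 1) := by
  have hev := hM.eigenvalues_pos
  have hdet : M.det = ((∏ i, hM.1.eigenvalues i : ℝ) : ℂ) := by
    rw [hM.1.det_eq_prod_eigenvalues]; push_cast; rfl
  have hdre : M.det.re = ∏ i, hM.1.eigenvalues i := by rw [hdet, Complex.ofReal_re]
  have htr : M.trace.re = ∑ i, hM.1.eigenvalues i := by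
    rw [trace_eq_sum_eig hM.1, ← Complex.ofReal_sum, Complex.ofReal_re]
  have hlog : Real.log M.det.re = ∑ i, Real.log (hM.1.eigenvalues i) := by
    rw [hdre, Real.log_prod (fun i _ => (hev i).ne')]
  have hle : ∀ i ∈ Finset.univ, Real.log (hM.1.eigenvalues i) ≤ hM.1.eigenvalues i - 1 :=
    fun i _ => Real.log_le_sub_one_of_pos (hev i)
  constructor
  · rw [hlog, htr]
    calc ∑ i, Real.log (hM.1.eigenvalues i) ≤ ∑ i, (hM.1.eigenvalues i - 1) :=
          Finset.sum_le_sum hle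
      _ = (∑ i, hM.1.eigenvalues i) - n := by
          rw [Finset.sum_sub_distrib]; simp
  · constructor
    · intro h
      have h' : ∑ i, Real.log (hM.1.eigenvalues i) = ∑ i, (hM.1.eigenvalues i - 1) := by
        rw [← hlog, h, htr, Finset.sum_sub_distrib]; simp
      have hall := (Finset.sum_eq_sum_iff_of_le hle).mp h'
      have h1 : ∀ i, hM.1.eigenvalues i = 1 := by
        intro i
        by_contra hne
        exact absurd (hall i (Finset.mem_univ i)).symm
          (Real.log_lt_sub_one_of_pos (hev i) hne).ne'
      have : M = (hM.1.eigenvectorUnitary : Matrix (Fin n) (Fin n) ℂ) *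
          (1 : Matrix (Fin n) (Fin n) ℂ) *
          (star (hM.1.eigenvectorUnitary : Matrix (Fin n) (Fin n) ℂ)) := by
        have hd : Matrix.diagonal (RCLike.ofReal ∘ hM.1.eigenvalues) =
            (1 : Matrix (Fin n) (Fin n) ℂ) := by
          ext i j
          rcases eq_or_ne i j with rfl | h
          · simp [h1]
          · simp [Matrix.diagonal_apply_ne _ h, Matrix.one_apply_ne h]
        conv_lhs => rw [hM.1.spectral_theorem, Unitary.conjStarAlgAut_apply, hd]
      rw [this, Matrix.mul_one,
        (Matrix.mem_unitaryGroup_iff).mp (hM.1.eigenvectorUnitary).2]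
    · rintro rfl
      simp

lemma posdef_conj' {n : ℕ} {A B : Matrix (Fin n) (Fin n) ℂ} (hA : A.PosDef)
    (hB : ∀ x : Fin n → ℂ, x ≠ 0 → B *ᵥ x ≠ 0) : (Bᴴ * A * B).PosDef := by
  refine Matrix.PosDef.of_dotProduct_mulVec_pos (Matrix.isHermitian_conjTranspose_mul_mul B hA.1) fun x hx => ?_
  simpa only [star_mulVec, dotProduct_mulVec, vecMul_vecMul] using hA.dotProduct_mulVec_pos (hB x hx)

/-- The maximizing covariance matrix: over Hermitian positive definite `Q`, the function
`Q ↦ -γ·log(det Q) - Re(tr(C·Q⁻¹))` attains its maximum `-γ·log(det(γ⁻¹·C)) - γ·m`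
uniquely at `Q = γ⁻¹ • C`. -/
theorem stmt0 (m : ℕ) (C : Matrix (Fin m) (Fin m) ℂ) (hC : C.PosDef)
    (γ : ℝ) (hγ : 0 < γ) :
    ∀ Q : Matrix (Fin m) (Fin m) ℂ, Q.PosDef →
      (-γ * Real.log Q.det.re - (Matrix.trace (C * Q⁻¹)).re
          ≤ -γ * Real.log ((γ⁻¹ • C : Matrix (Fin m) (Fin m) ℂ).det.re) - γ * m) ∧
      ((-γ * Real.log Q.det.re - (Matrix.trace (C * Q⁻¹)).re
          = -γ * Real.log ((γ⁻¹ • C : Matrix (Fin m) (Fin m) ℂ).det.re) - γ * m)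
        ↔ Q = γ⁻¹ • C) := by
  intro Q hQ
  set A : Matrix (Fin m) (Fin m) ℂ := γ⁻¹ • C with hA_def
  have hA : A.PosDef := by
    refine Matrix.PosDef.of_dotProduct_mulVec_pos ?_ fun x hx => ?_
    · show Aᴴ = A
      rw [hA_def, Matrix.conjTranspose_smul, hC.1.eq, star_trivial]
    · have h := hC.dotProduct_mulVec_pos hx
      rw [hA_def, Matrix.smul_mulVec, dotProduct_smul]
      rw [Complex.lt_def] at h ⊢
      constructor
      · simpa [Complex.real_smul, Complex.mul_re] using
          mul_pos (inv_pos.mpr hγ) h.1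
      · simp [Complex.real_smul, Complex.mul_im, ← h.2]
  -- square root of Q
  obtain ⟨S, hS1, hSh⟩ : ∃ S : Matrix (Fin m) (Fin m) ℂ, S * S = Q ∧ S.IsHermitian := by
    open scoped MatrixOrder in
    exact ⟨CFC.sqrt Q, CFC.sqrt_mul_sqrt_self Q hQ.posSemidef.nonneg,
      (CFC.sqrt_nonneg Q).posSemidef.isHermitian⟩
  have hdetQ : (0 : ℂ) < Q.det := hQ.det_pos
  have hdetS : IsUnit S.det := by
    rw [isUnit_iff_ne_zero]
    intro h
    have : Q.det = 0 := by rw [← hS1, Matrix.det_mul, h, mul_zero]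
    exact hdetQ.ne' this
  have hSinj : ∀ x : Fin m → ℂ, x ≠ 0 → S⁻¹ *ᵥ x ≠ 0 := by
    intro x hx h0
    apply hx
    calc x = (S * S⁻¹) *ᵥ x := by rw [Matrix.mul_nonsing_inv _ hdetS, Matrix.one_mulVec]
      _ = S *ᵥ (S⁻¹ *ᵥ x) := by rw [← Matrix.mulVec_mulVec]
      _ = 0 := by rw [h0, Matrix.mulVec_zero]
  have hSinv_herm : S⁻¹.IsHermitian := hSh.inv
  set M : Matrix (Fin m) (Fin m) ℂ := S⁻¹ * A * S⁻¹ with hM_def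
  have hM : M.PosDef := by
    have := posdef_conj' hA hSinj
    rwa [hSinv_herm.eq] at this
  have hQA : S⁻¹ * S⁻¹ = Q⁻¹ := by rw [← hS1, Matrix.mul_inv_rev]
  -- trace relation
  have hCA : C = γ • A := by
    rw [hA_def, smul_smul, mul_inv_cancel₀ hγ.ne', one_smul]
  have htrAQ : Matrix.trace (A * Q⁻¹) = M.trace := by
    rw [← hQA, ← Matrix.mul_assoc, Matrix.trace_mul_comm, ← Matrix.mul_assoc]
  have htr : (Matrix.trace (C * Q⁻¹)).re = γ * M.trace.re := by
    rw [hCA, Matrix.smul_mul, Matrix.trace_smul, ← htrAQ]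
    simp [Complex.real_smul, Complex.mul_re]
  -- determinant relation
  have hdetA : (0 : ℂ) < A.det := hA.det_pos
  have hQre : (0 : ℝ) < Q.det.re := (Complex.lt_def.mp hdetQ).1
  have hAre : (0 : ℝ) < A.det.re := (Complex.lt_def.mp hdetA).1
  have hQc : Q.det = (Q.det.re : ℂ) := Complex.ext rfl (by
    simpa using (Complex.lt_def.mp hdetQ).2.symm)
  have hAc : A.det = (A.det.re : ℂ) := Complex.ext rfl (by
    simpa using (Complex.lt_def.mp hdetA).2.symm)
  have hdetM : M.det = ((A.det.re / Q.det.re : ℝ) : ℂ) := by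
    calc M.det = S⁻¹.det * A.det * S⁻¹.det := by rw [hM_def, Matrix.det_mul, Matrix.det_mul]
      _ = A.det * (S⁻¹ * S⁻¹).det := by rw [Matrix.det_mul]; ring
      _ = A.det * Q⁻¹.det := by rw [hQA]
      _ = A.det * Q.det⁻¹ := by rw [Matrix.det_nonsing_inv, Ring.inverse_eq_inv']
      _ = ((A.det.re / Q.det.re : ℝ) : ℂ) := by
          conv_lhs => rw [hQc, hAc]
          push_cast
          ring
  have hlogM : Real.log M.det.re = Real.log A.det.re - Real.log Q.det.re := by
    rw [hdetM, Complex.ofReal_re, Real.log_div hAre.ne' hQre.ne']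
  -- M = 1 ↔ Q = A
  have hMQ : M = 1 ↔ Q = A := by
    constructor
    · intro h
      have e1 : S * M * S = A := by
        rw [hM_def]
        calc S * (S⁻¹ * A * S⁻¹) * S = (S * S⁻¹) * A * (S⁻¹ * S) := by
              simp only [Matrix.mul_assoc]
          _ = A := by
              rw [Matrix.mul_nonsing_inv _ hdetS, Matrix.nonsing_inv_mul _ hdetS,
                Matrix.one_mul, Matrix.mul_one]
      rw [h, Matrix.mul_one, hS1] at e1
      exact e1
    · intro h
      rw [hM_def, ← h, ← hS1]
      calc S⁻¹ * (S * S) * S⁻¹ = (S⁻¹ * S) * (S * S⁻¹) := by simp only [Matrix.mul_assoc]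
        _ = 1 := by rw [Matrix.nonsing_inv_mul _ hdetS, Matrix.mul_nonsing_inv _ hdetS,
              Matrix.one_mul]
  obtain ⟨KI, KE⟩ := key hM
  rw [hlogM] at KI KE
  rw [htr]
  constructor
  · nlinarith [mul_le_mul_of_nonneg_left KI hγ.le]
  · constructor
    · intro h
      apply hMQ.mp
      apply KE.mp
      have : γ * (Real.log A.det.re - Real.log Q.det.re) = γ * (M.trace.re - ↑m) := by
        linear_combination h
      exact mul_left_cancel₀ hγ.ne' this
    · intro h
      have := KE.mpr (hMQ.mpr h)
      linear_combination γ * this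
end

section
/- Let Q₀ be an m×m Hermitian positive definite complex matrix, let A = [a | B] be an m×d complex matrix partitioned into a column a ∈ ℂ^m and an m×(d-1) block B, and suppose A*·Q₀⁻¹·A is invertible (hence B*·Q₀⁻¹·B is invertible). Define Φ_B := B·(B*·Q₀⁻¹·B)⁻¹·B*·Q₀⁻¹, Φ_B^⊥ := I_m - Φ_B, and ã := Φ_B^⊥·a. Then ã*·Q₀⁻¹·ã ≠ 0, and with Φ_ã := ã·(ã*·Q₀⁻¹·ã)⁻¹·ã*·Q₀⁻¹ and Φ_A := A·(A*·Q₀⁻¹·A)⁻¹·A*·Q₀⁻¹, the decomposition Φ_A = Φ_B + Φ_ã holds; equivalently, I_m - Φ_A = Φ_B^⊥ - Φ_ã. -/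
open Matrix ComplexOrder

set_option maxHeartbeats 1000000 in
/-- Decomposition of the weighted projector: for `A = [a | B]` with Gram matrix
`Aᴴ Q₀⁻¹ A` invertible, the residual `ã = Φ_B^⊥ a` has `ãᴴ Q₀⁻¹ ã ≠ 0` and
`Φ_A = Φ_B + Φ_ã`; equivalently `I - Φ_A = Φ_B^⊥ - Φ_ã`. -/
theorem stmt9 (m k : ℕ) (Q₀ : Matrix (Fin m) (Fin m) ℂ) (hQ₀ : Q₀.PosDef)
    (a : Matrix (Fin m) (Fin 1) ℂ) (B : Matrix (Fin m) (Fin k) ℂ)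
    (A : Matrix (Fin m) (Fin 1 ⊕ Fin k) ℂ) (hA : A = fromCols a B)
    (hGram : IsUnit (Aᴴ * Q₀⁻¹ * A))
    (ΦA : Matrix (Fin m) (Fin m) ℂ) (hΦA : ΦA = A * (Aᴴ * Q₀⁻¹ * A)⁻¹ * Aᴴ * Q₀⁻¹)
    (ΦB : Matrix (Fin m) (Fin m) ℂ) (hΦB : ΦB = B * (Bᴴ * Q₀⁻¹ * B)⁻¹ * Bᴴ * Q₀⁻¹)
    (ΦBperp : Matrix (Fin m) (Fin m) ℂ) (hΦBperp : ΦBperp = 1 - ΦB)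
    (atilde : Matrix (Fin m) (Fin 1) ℂ) (hatilde : atilde = ΦBperp * a)
    (Φa : Matrix (Fin m) (Fin m) ℂ)
    (hΦa : Φa = atilde * (atildeᴴ * Q₀⁻¹ * atilde)⁻¹ * atildeᴴ * Q₀⁻¹) :
    atildeᴴ * Q₀⁻¹ * atilde ≠ 0 ∧
    ΦA = ΦB + Φa ∧
    (1 : Matrix (Fin m) (Fin m) ℂ) - ΦA = ΦBperp - Φa := by
  have hQ : (Q₀⁻¹).PosDef := hQ₀.inv
  have hQH : (Q₀⁻¹)ᴴ = Q₀⁻¹ := hQ.isHermitian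
  have hGdet : IsUnit (Aᴴ * Q₀⁻¹ * A).det := (Matrix.isUnit_iff_isUnit_det _).mp hGram
  have hGGinv : (Aᴴ * Q₀⁻¹ * A) * (Aᴴ * Q₀⁻¹ * A)⁻¹ = 1 := Matrix.mul_nonsing_inv _ hGdet
  have hGinj : Function.Injective (Aᴴ * Q₀⁻¹ * A).mulVec :=
    Matrix.mulVec_injective_iff_isUnit.mpr hGram
  -- kernel of A is trivial
  have hAker : ∀ v, A *ᵥ v = 0 → v = 0 := by
    intro v hv
    have h0 : (Aᴴ * Q₀⁻¹ * A) *ᵥ v = (Aᴴ * Q₀⁻¹ * A) *ᵥ 0 := by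
      rw [Matrix.mulVec_zero, ← Matrix.mulVec_mulVec, hv, Matrix.mulVec_zero]
    exact hGinj h0
  -- quadratic form identity
  have hquad : ∀ (n : ℕ) (X : Matrix (Fin m) (Fin n) ℂ) (v : Fin n → ℂ),
      star v ⬝ᵥ ((Xᴴ * Q₀⁻¹ * X) *ᵥ v) = star (X *ᵥ v) ⬝ᵥ (Q₀⁻¹ *ᵥ (X *ᵥ v)) := by
    intro n X v
    rw [← Matrix.mulVec_mulVec, ← Matrix.mulVec_mulVec, Matrix.dotProduct_mulVec,
      ← Matrix.star_mulVec]
  -- kernel of B is trivial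
  have hBker : ∀ v, B *ᵥ v = 0 → v = 0 := by
    intro v hv
    have hv' : A *ᵥ (Sum.elim 0 v) = 0 := by
      rw [hA, fromCols_mulVec_sumElim, hv, Matrix.mulVec_zero, add_zero]
    have h0 := hAker _ hv'
    funext i
    exact congrFun h0 (Sum.inr i)
  -- δ := Bᴴ Q B is a unit
  have hδ : IsUnit (Bᴴ * Q₀⁻¹ * B) := by
    rw [← Matrix.mulVec_injective_iff_isUnit]
    intro v w hvw
    have hker : (Bᴴ * Q₀⁻¹ * B) *ᵥ (v - w) = 0 := by
      rw [Matrix.mulVec_sub, hvw, sub_self]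
    have hq : star (B *ᵥ (v - w)) ⬝ᵥ (Q₀⁻¹ *ᵥ (B *ᵥ (v - w))) = 0 := by
      rw [← hquad, hker, dotProduct_zero]
    have hBv : B *ᵥ (v - w) = 0 := by
      by_contra hne
      exact (hQ.dotProduct_mulVec_pos hne).ne' hq
    have := hBker _ hBv
    rwa [sub_eq_zero] at this
  have hδdet : IsUnit (Bᴴ * Q₀⁻¹ * B).det := (Matrix.isUnit_iff_isUnit_det _).mp hδ
  have hNδ : (Bᴴ * Q₀⁻¹ * B)⁻¹ * (Bᴴ * Q₀⁻¹ * B) = 1 := Matrix.nonsing_inv_mul _ hδdet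
  -- ΦB basic facts
  have hΦBB : ΦB * B = B := by
    calc ΦB * B = B * ((Bᴴ * Q₀⁻¹ * B)⁻¹ * (Bᴴ * Q₀⁻¹ * B)) := by
          rw [hΦB]; simp only [Matrix.mul_assoc]
      _ = B := by rw [hNδ, Matrix.mul_one]
  have hδH : (Bᴴ * Q₀⁻¹ * B)ᴴ = Bᴴ * Q₀⁻¹ * B := by
    simp [Matrix.conjTranspose_mul, hQH, Matrix.mul_assoc]
  have hNH : ((Bᴴ * Q₀⁻¹ * B)⁻¹)ᴴ = (Bᴴ * Q₀⁻¹ * B)⁻¹ := by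
    rw [Matrix.conjTranspose_nonsing_inv, hδH]
  have hΦB_adj : ΦBᴴ * Q₀⁻¹ = Q₀⁻¹ * ΦB := by
    rw [hΦB]
    simp only [Matrix.conjTranspose_mul, hQH, hNH, Matrix.conjTranspose_conjTranspose]
    simp only [Matrix.mul_assoc]
  have hperp_adj : ΦBperpᴴ * Q₀⁻¹ = Q₀⁻¹ * ΦBperp := by
    rw [hΦBperp, Matrix.conjTranspose_sub, Matrix.conjTranspose_one, Matrix.sub_mul,
      Matrix.mul_sub, Matrix.one_mul, Matrix.mul_one, hΦB_adj]
  have hΦBperpB : ΦBperp * B = 0 := by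
    rw [hΦBperp, Matrix.sub_mul, Matrix.one_mul, hΦBB, sub_self]
  -- atilde = A * w
  set w : Matrix (Fin 1 ⊕ Fin k) (Fin 1) ℂ :=
    fromRows (1 : Matrix (Fin 1) (Fin 1) ℂ) (-((Bᴴ * Q₀⁻¹ * B)⁻¹ * (Bᴴ * Q₀⁻¹ * a))) with hw
  have hAw : A * w = atilde := by
    rw [hw, hA, fromCols_mul_fromRows, hatilde, hΦBperp, hΦB]
    simp only [Matrix.mul_assoc, Matrix.mul_one, Matrix.one_mul, Matrix.mul_neg,
      Matrix.neg_mul, Matrix.sub_mul, Matrix.add_mul, sub_eq_add_neg]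
  -- atilde ≠ 0
  have hat_ne : atilde ≠ 0 := by
    intro h0
    have hv : A *ᵥ (fun p => w p 0) = 0 := by
      funext i
      have := congrFun (congrFun (hAw.trans h0) i) 0
      simpa [Matrix.mul_apply, Matrix.mulVec, dotProduct] using this
    have h1 := congrFun (hAker _ hv) (Sum.inl 0)
    rw [hw] at h1
    simp [Matrix.fromRows_apply_inl, Matrix.one_apply] at h1
  -- the scalar s := atildeᴴ Q₀⁻¹ atilde
  have hcol : (atilde *ᵥ fun _ => (1 : ℂ)) ≠ 0 := by
    intro h
    apply hat_ne
    ext i j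
    have := congrFun h i
    simp only [Matrix.mulVec, dotProduct, Fin.sum_univ_one, mul_one, Pi.zero_apply] at this
    rw [Subsingleton.elim j 0]
    simpa using this
  have hpos := hQ.dotProduct_mulVec_pos hcol
  have hs00 : (atildeᴴ * Q₀⁻¹ * atilde) 0 0 =
      star (atilde *ᵥ fun _ => (1 : ℂ)) ⬝ᵥ (Q₀⁻¹ *ᵥ (atilde *ᵥ fun _ => (1 : ℂ))) := by
    rw [← hquad]
    simp [dotProduct, Matrix.mulVec, Fin.sum_univ_one]
  have hs00ne : (atildeᴴ * Q₀⁻¹ * atilde) 0 0 ≠ 0 := by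
    rw [hs00]; exact hpos.ne'
  have hs_unit : IsUnit (atildeᴴ * Q₀⁻¹ * atilde) := by
    rw [Matrix.isUnit_iff_isUnit_det, Matrix.det_fin_one]
    exact isUnit_iff_ne_zero.mpr hs00ne
  have hsdet : IsUnit (atildeᴴ * Q₀⁻¹ * atilde).det := (Matrix.isUnit_iff_isUnit_det _).mp hs_unit
  have hsinv : (atildeᴴ * Q₀⁻¹ * atilde)⁻¹ * (atildeᴴ * Q₀⁻¹ * atilde) = 1 :=
    Matrix.nonsing_inv_mul _ hsdet
  have hs_ne : atildeᴴ * Q₀⁻¹ * atilde ≠ 0 := by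
    intro h
    exact hs00ne (by rw [h]; simp)
  -- Φa basic facts
  have hatQB : atildeᴴ * Q₀⁻¹ * B = 0 := by
    calc atildeᴴ * Q₀⁻¹ * B = aᴴ * (ΦBperpᴴ * Q₀⁻¹) * B := by
          rw [hatilde, Matrix.conjTranspose_mul]; simp only [Matrix.mul_assoc]
      _ = aᴴ * (Q₀⁻¹ * (ΦBperp * B)) := by rw [hperp_adj]; simp only [Matrix.mul_assoc]
      _ = 0 := by rw [hΦBperpB, Matrix.mul_zero, Matrix.mul_zero]
  have hΦaB : Φa * B = 0 := by
    calc Φa * B = atilde * ((atildeᴴ * Q₀⁻¹ * atilde)⁻¹ * (atildeᴴ * Q₀⁻¹ * B)) := by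
          rw [hΦa]; simp only [Matrix.mul_assoc]
      _ = 0 := by rw [hatQB, Matrix.mul_zero, Matrix.mul_zero]
  have hdec : a = atilde + B * ((Bᴴ * Q₀⁻¹ * B)⁻¹ * (Bᴴ * Q₀⁻¹ * a)) := by
    rw [hatilde, hΦBperp, hΦB]
    simp only [Matrix.mul_assoc, Matrix.sub_mul, Matrix.one_mul]
    simp
  have hs_a : atildeᴴ * Q₀⁻¹ * a = atildeᴴ * Q₀⁻¹ * atilde := by
    conv_lhs => rw [hdec]
    rw [Matrix.mul_add]
    have hz : atildeᴴ * Q₀⁻¹ * (B * ((Bᴴ * Q₀⁻¹ * B)⁻¹ * (Bᴴ * Q₀⁻¹ * a))) = 0 := by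
      rw [← Matrix.mul_assoc, hatQB, Matrix.zero_mul]
    rw [hz, add_zero]
  have hΦaa : Φa * a = atilde := by
    calc Φa * a = atilde * ((atildeᴴ * Q₀⁻¹ * atilde)⁻¹ * (atildeᴴ * Q₀⁻¹ * a)) := by
          rw [hΦa]; simp only [Matrix.mul_assoc]
      _ = atilde := by rw [hs_a, hsinv, Matrix.mul_one]
  -- anything of the form A * M * Aᴴ * Q₀⁻¹ is fixed by right mult by ΦA
  have hform : ∀ M : Matrix (Fin 1 ⊕ Fin k) (Fin 1 ⊕ Fin k) ℂ,
      (A * M * Aᴴ * Q₀⁻¹) * ΦA = A * M * Aᴴ * Q₀⁻¹ := by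
    intro M
    rw [hΦA]
    calc (A * M * Aᴴ * Q₀⁻¹) * (A * (Aᴴ * Q₀⁻¹ * A)⁻¹ * Aᴴ * Q₀⁻¹)
        = A * M * ((Aᴴ * Q₀⁻¹ * A) * (Aᴴ * Q₀⁻¹ * A)⁻¹) * (Aᴴ * Q₀⁻¹) := by
          simp only [Matrix.mul_assoc]
      _ = A * M * Aᴴ * Q₀⁻¹ := by rw [hGGinv, Matrix.mul_one]; simp only [Matrix.mul_assoc]
  -- ΦB and Φa are of that form
  have hBe : A * (fromBlocks 0 0 0 ((Bᴴ * Q₀⁻¹ * B)⁻¹) : Matrix (Fin 1 ⊕ Fin k) (Fin 1 ⊕ Fin k) ℂ) * Aᴴ * Q₀⁻¹ = ΦB := by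
    rw [hΦB, hA, conjTranspose_fromCols_eq_fromRows_conjTranspose,
      fromCols_mul_fromBlocks]
    simp [Matrix.fromCols_mul_fromRows, Matrix.mul_assoc]
  have hBkey : ΦB * ΦA = ΦB := by rw [← hBe]; exact hform _
  have hae : A * (w * (atildeᴴ * Q₀⁻¹ * atilde)⁻¹ * wᴴ) * Aᴴ * Q₀⁻¹ = Φa := by
    rw [hΦa]
    calc A * (w * (atildeᴴ * Q₀⁻¹ * atilde)⁻¹ * wᴴ) * Aᴴ * Q₀⁻¹
        = (A * w) * (atildeᴴ * Q₀⁻¹ * atilde)⁻¹ * ((A * w)ᴴ * Q₀⁻¹) := by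
          rw [Matrix.conjTranspose_mul]; simp only [Matrix.mul_assoc]
      _ = atilde * (atildeᴴ * Q₀⁻¹ * atilde)⁻¹ * atildeᴴ * Q₀⁻¹ := by
          rw [hAw]; simp only [Matrix.mul_assoc]
  have hakey : Φa * ΦA = Φa := by rw [← hae]; exact hform _
  -- X * A = A
  have hXa : (ΦB + Φa) * a = a := by
    rw [Matrix.add_mul, hΦaa, hatilde, hΦBperp, Matrix.sub_mul, Matrix.one_mul,
      add_sub_cancel]
  have hXB : (ΦB + Φa) * B = B := by
    rw [Matrix.add_mul, hΦaB, hΦBB, add_zero]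
  have hXA : (ΦB + Φa) * A = A := by
    rw [hA, Matrix.mul_fromCols, hXa, hXB]
  -- conclude
  have hmain : ΦA = ΦB + Φa := by
    have h1 : ΦA = (ΦB + Φa) * ΦA := by
      calc ΦA = ((ΦB + Φa) * A) * (Aᴴ * Q₀⁻¹ * A)⁻¹ * Aᴴ * Q₀⁻¹ := by rw [hXA, ← hΦA]
        _ = (ΦB + Φa) * ΦA := by rw [hΦA]; simp only [Matrix.mul_assoc]
    rw [h1, Matrix.add_mul, hBkey, hakey]
  refine ⟨hs_ne, hmain, ?_⟩
  rw [hmain, hΦBperp]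
  abel
end

section
/- Let Q₀ be an m×m Hermitian positive definite complex matrix, let A = [a | B] be an m×d complex matrix with A*·Q₀⁻¹·A invertible (hence B*·Q₀⁻¹·B invertible), R₀ an m×m Hermitian positive semidefinite complex matrix and α > 0 a real number. Define Φ_A := A·(A*·Q₀⁻¹·A)⁻¹·A*·Q₀⁻¹, Φ_A^⊥ := I_m - Φ_A, Φ_B := B·(B*·Q₀⁻¹·B)⁻¹·B*·Q₀⁻¹, Φ_B^⊥ := I_m - Φ_B, G := Q₀⁻¹·Φ_B^⊥, and suppose I_m + α·G·R₀ is invertible and a*·G·a ≠ 0. Define Ψ := G·R₀·(I_m + α·G·R₀)⁻¹·G. Then det(I_m + α·Q₀⁻¹·Φ_A^⊥·R₀) = det(I_m + α·G·R₀)·(1 - α·(a*·Ψ·a)/(a*·G·a)). -/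
open Matrix ComplexOrder

/-- Determinant factorization underlying the one-dimensional search cost `V(θ)`:
`det(I + α Q₀⁻¹ Φ_A^⊥ R₀) = det(I + α G R₀) · (1 - α (aᴴ Ψ a)/(aᴴ G a))`
for `A = [a | B]`, `G = Q₀⁻¹ Φ_B^⊥` and `Ψ = G R₀ (I + α G R₀)⁻¹ G`. -/
theorem stmt12 (m k : ℕ) (Q₀ : Matrix (Fin m) (Fin m) ℂ) (hQ₀ : Q₀.PosDef)
    (a : Matrix (Fin m) (Fin 1) ℂ) (B : Matrix (Fin m) (Fin k) ℂ)
    (A : Matrix (Fin m) (Fin 1 ⊕ Fin k) ℂ) (hA : A = fromCols a B)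
    (hGram : IsUnit (Aᴴ * Q₀⁻¹ * A))
    (R₀ : Matrix (Fin m) (Fin m) ℂ) (hR₀ : R₀.PosSemidef)
    (α : ℝ) (hα : 0 < α)
    (ΦAperp : Matrix (Fin m) (Fin m) ℂ)
    (hΦAperp : ΦAperp = 1 - A * (Aᴴ * Q₀⁻¹ * A)⁻¹ * Aᴴ * Q₀⁻¹)
    (ΦBperp : Matrix (Fin m) (Fin m) ℂ)
    (hΦBperp : ΦBperp = 1 - B * (Bᴴ * Q₀⁻¹ * B)⁻¹ * Bᴴ * Q₀⁻¹)
    (G : Matrix (Fin m) (Fin m) ℂ) (hG : G = Q₀⁻¹ * ΦBperp)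
    (hinv : IsUnit ((1 : Matrix (Fin m) (Fin m) ℂ) + (α : ℂ) • (G * R₀)))
    (hden : (aᴴ * G * a) 0 0 ≠ 0)
    (Ψ : Matrix (Fin m) (Fin m) ℂ)
    (hΨ : Ψ = G * R₀ * ((1 : Matrix (Fin m) (Fin m) ℂ) + (α : ℂ) • (G * R₀))⁻¹ * G) :
    ((1 : Matrix (Fin m) (Fin m) ℂ) + (α : ℂ) • (Q₀⁻¹ * ΦAperp * R₀)).det
      = ((1 : Matrix (Fin m) (Fin m) ℂ) + (α : ℂ) • (G * R₀)).det
        * (1 - (α : ℂ) * ((aᴴ * Ψ * a) 0 0) / ((aᴴ * G * a) 0 0)) := by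
  have hQ : (Q₀⁻¹).PosDef := hQ₀.inv
  have hQH : (Q₀⁻¹)ᴴ = Q₀⁻¹ := hQ.isHermitian
  -- B has full column rank
  have hAinj : Function.Injective (A.mulVec) := by
    intro x y hxy
    have h2 : (Aᴴ * Q₀⁻¹ * A) *ᵥ x = (Aᴴ * Q₀⁻¹ * A) *ᵥ y := by
      simp only [← Matrix.mulVec_mulVec, hxy]
    exact (Matrix.mulVec_injective_iff_isUnit.mpr hGram) h2
  have hBinj : ∀ x : Fin k → ℂ, B *ᵥ x = 0 → x = 0 := by
    intro x hx
    have h0 : A *ᵥ (Sum.elim 0 x) = A *ᵥ (Sum.elim 0 0) := by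
      rw [hA, fromCols_mulVec_sumElim, fromCols_mulVec_sumElim]
      simp [hx]
    have := hAinj h0
    have hxz : ∀ i, Sum.elim (0 : Fin 1 → ℂ) x (Sum.inr i) = Sum.elim (0 : Fin 1 → ℂ) (0 : Fin k → ℂ) (Sum.inr i) := fun i => congrFun this (Sum.inr i)
    funext i; simpa using hxz i
  have hGramB : IsUnit (Bᴴ * Q₀⁻¹ * B) := by
    have hpd : (Bᴴ * Q₀⁻¹ * B).PosDef := by
      refine PosDef.of_dotProduct_mulVec_pos (isHermitian_conjTranspose_mul_mul B hQ.isHermitian) (fun x hx => ?_)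
      have hBx : B *ᵥ x ≠ 0 := fun h => hx (hBinj x h)
      have := hQ.dotProduct_mulVec_pos hBx
      simpa only [star_mulVec, Matrix.dotProduct_mulVec, Matrix.vecMul_vecMul] using this
    exact hpd.isUnit
  have hdetB : IsUnit (Bᴴ * Q₀⁻¹ * B).det := (Matrix.isUnit_iff_isUnit_det _).mp hGramB
  have hdetA : IsUnit (Aᴴ * Q₀⁻¹ * A).det := (Matrix.isUnit_iff_isUnit_det _).mp hGram
  -- notation
  set N : Matrix (Fin k) (Fin k) ℂ := Bᴴ * Q₀⁻¹ * B with hN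
  set ΦB : Matrix (Fin m) (Fin m) ℂ := B * N⁻¹ * Bᴴ * Q₀⁻¹ with hΦB
  have hGeq : G = Q₀⁻¹ - Q₀⁻¹ * ΦB := by
    rw [hG, hΦBperp, hΦB]; noncomm_ring
  have hΦBB : ΦB * B = B := by
    rw [hΦB]
    calc B * N⁻¹ * Bᴴ * Q₀⁻¹ * B = B * N⁻¹ * (Bᴴ * Q₀⁻¹ * B) := by
          simp only [Matrix.mul_assoc]
      _ = B := by rw [← hN, Matrix.nonsing_inv_mul_cancel_right _ _ hdetB]
  have hGB : G * B = 0 := by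
    rw [hGeq, Matrix.sub_mul, Matrix.mul_assoc, hΦBB, sub_self]
  have hNH : Nᴴ = N := by
    rw [hN]; simp [Matrix.conjTranspose_mul, hQH, Matrix.mul_assoc]
  have hNiH : (N⁻¹)ᴴ = N⁻¹ := by
    rw [Matrix.conjTranspose_nonsing_inv, hNH]
  have hGH : Gᴴ = G := by
    rw [hGeq, hΦB]
    simp only [Matrix.conjTranspose_sub, Matrix.conjTranspose_mul, hQH, hNiH,
      Matrix.conjTranspose_conjTranspose]
    rw [sub_right_inj]
    simp only [← Matrix.mul_assoc]
  have hBG : Bᴴ * G = 0 := by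
    have := congrArg Matrix.conjTranspose hGB
    simpa [Matrix.conjTranspose_mul, hGH] using this
  -- scalar s
  set s : ℂ := (aᴴ * G * a) 0 0 with hsdef
  have h11 : aᴴ * G * a = s • (1 : Matrix (Fin 1) (Fin 1) ℂ) := by
    ext i j; fin_cases i; fin_cases j; simp [hsdef]
  -- the tilde vector and T
  set c : Matrix (Fin k) (Fin 1) ℂ := N⁻¹ * (Bᴴ * (Q₀⁻¹ * a)) with hc
  set at' : Matrix (Fin m) (Fin 1) ℂ := a - B * c with hat
  set T : Matrix (Fin m) (Fin m) ℂ := ΦB + s⁻¹ • (at' * (aᴴ * G)) with hT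
  have hQat : Q₀⁻¹ * at' = G * a := by
    rw [hat, hGeq, hΦB, hc]
    simp only [Matrix.mul_sub, Matrix.sub_mul, Matrix.mul_assoc]
  have hGat : aᴴ * (Q₀⁻¹ * at') = aᴴ * G * a := by rw [hQat, Matrix.mul_assoc]
  -- T * a = a
  have hGBa : aᴴ * G * B = 0 := by
    rw [Matrix.mul_assoc, hGB, Matrix.mul_zero]
  have hTa : T * a = a := by
    rw [hT, Matrix.add_mul, Matrix.smul_mul, Matrix.mul_assoc at' (aᴴ * G) a, h11]
    have h2 : at' * ((s • (1 : Matrix (Fin 1) (Fin 1) ℂ))) = s • at' := by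
      simp
    rw [h2, smul_smul, inv_mul_cancel₀ hden, one_smul]
    rw [hΦB, hat, hc]
    simp only [Matrix.mul_assoc]
    abel
  have hTB : T * B = B := by
    rw [hT, Matrix.add_mul, hΦBB, Matrix.smul_mul, Matrix.mul_assoc, hGBa, Matrix.mul_zero,
      smul_zero, add_zero]
  -- Q₀⁻¹ * T and its hermitianness
  have hQT : Q₀⁻¹ * T = Q₀⁻¹ * ΦB + s⁻¹ • (G * a * (aᴴ * G)) := by
    rw [hT, Matrix.mul_add, Matrix.mul_smul, ← Matrix.mul_assoc Q₀⁻¹ at' (aᴴ * G), hQat]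
  have hsreal : star s = s := by
    have hH : (aᴴ * G * a)ᴴ = aᴴ * G * a := by
      simp only [Matrix.conjTranspose_mul, hGH, Matrix.conjTranspose_conjTranspose]
      simp only [Matrix.mul_assoc]
    calc star s = (aᴴ * G * a)ᴴ 0 0 := by rw [hsdef, Matrix.conjTranspose_apply]
      _ = s := by rw [hH, hsdef]
  have hQTH : (Q₀⁻¹ * T)ᴴ = Q₀⁻¹ * T := by
    have h1 : (Q₀⁻¹ * ΦB)ᴴ = Q₀⁻¹ * ΦB := by
      rw [hΦB]
      simp only [Matrix.conjTranspose_mul, hQH, hNiH, Matrix.conjTranspose_conjTranspose]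
      simp only [Matrix.mul_assoc]
    have h2 : (G * a * (aᴴ * G))ᴴ = G * a * (aᴴ * G) := by
      simp only [Matrix.conjTranspose_mul, hGH, Matrix.conjTranspose_conjTranspose]
    rw [hQT, Matrix.conjTranspose_add, Matrix.conjTranspose_smul, star_inv₀, hsreal, h1, h2]
  -- T = A * Z
  set Z : Matrix (Fin 1 ⊕ Fin k) (Fin m) ℂ :=
    fromRows 0 (N⁻¹ * (Bᴴ * Q₀⁻¹))
      + fromRows (1 : Matrix (Fin 1) (Fin 1) ℂ) (-c) * (s⁻¹ • (aᴴ * G)) with hZ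
  have hAZ : T = A * Z := by
    rw [hT, hZ, hA, Matrix.mul_add,
      ← Matrix.mul_assoc (fromCols a B) (fromRows (1 : Matrix (Fin 1) (Fin 1) ℂ) (-c)),
      fromCols_mul_fromRows, fromCols_mul_fromRows,
      Matrix.mul_zero, zero_add, Matrix.mul_one, Matrix.mul_neg, ← sub_eq_add_neg,
      ← hat, Matrix.mul_smul, hΦB]
    simp only [Matrix.mul_assoc]
  -- A-side identities
  have hTA : T * A = A := by
    rw [hA, Matrix.mul_fromCols, hTa, hTB]
  have hAQT : Aᴴ * Q₀⁻¹ * T = Aᴴ * Q₀⁻¹ := by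
    have e1 : (Aᴴ * (Q₀⁻¹ * T))ᴴ = (Aᴴ * Q₀⁻¹)ᴴ := by
      rw [Matrix.conjTranspose_mul, Matrix.conjTranspose_conjTranspose, hQTH,
        Matrix.conjTranspose_mul, Matrix.conjTranspose_conjTranspose, hQH,
        Matrix.mul_assoc, hTA]
    have e2 := congrArg Matrix.conjTranspose e1
    rw [Matrix.conjTranspose_conjTranspose, Matrix.conjTranspose_conjTranspose] at e2
    rw [Matrix.mul_assoc]
    exact e2
  have hAQΦA : Aᴴ * Q₀⁻¹ * (A * ((Aᴴ * Q₀⁻¹ * A)⁻¹ * (Aᴴ * Q₀⁻¹))) = Aᴴ * Q₀⁻¹ := by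
    calc Aᴴ * Q₀⁻¹ * (A * ((Aᴴ * Q₀⁻¹ * A)⁻¹ * (Aᴴ * Q₀⁻¹)))
        = (Aᴴ * Q₀⁻¹ * A) * (Aᴴ * Q₀⁻¹ * A)⁻¹ * (Aᴴ * Q₀⁻¹) := by
          simp only [Matrix.mul_assoc]
      _ = Aᴴ * Q₀⁻¹ := by rw [Matrix.mul_nonsing_inv _ hdetA, Matrix.one_mul]
  have hZW : (Aᴴ * Q₀⁻¹ * A)⁻¹ * (Aᴴ * Q₀⁻¹) = Z := by
    have e2 : (Aᴴ * Q₀⁻¹ * A) * ((Aᴴ * Q₀⁻¹ * A)⁻¹ * (Aᴴ * Q₀⁻¹)) = (Aᴴ * Q₀⁻¹ * A) * Z := by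
      calc (Aᴴ * Q₀⁻¹ * A) * ((Aᴴ * Q₀⁻¹ * A)⁻¹ * (Aᴴ * Q₀⁻¹))
          = Aᴴ * Q₀⁻¹ * (A * ((Aᴴ * Q₀⁻¹ * A)⁻¹ * (Aᴴ * Q₀⁻¹))) := by
            simp only [Matrix.mul_assoc]
        _ = Aᴴ * Q₀⁻¹ := hAQΦA
        _ = Aᴴ * Q₀⁻¹ * T := hAQT.symm
        _ = Aᴴ * Q₀⁻¹ * (A * Z) := by rw [← hAZ]
        _ = (Aᴴ * Q₀⁻¹ * A) * Z := by simp only [Matrix.mul_assoc]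
    have e3 := congrArg (fun X => (Aᴴ * Q₀⁻¹ * A)⁻¹ * X) e2
    simpa only [Matrix.nonsing_inv_mul_cancel_left _ _ hdetA] using e3
  have hΦAT : A * (Aᴴ * Q₀⁻¹ * A)⁻¹ * Aᴴ * Q₀⁻¹ = T := by
    calc A * (Aᴴ * Q₀⁻¹ * A)⁻¹ * Aᴴ * Q₀⁻¹
        = A * ((Aᴴ * Q₀⁻¹ * A)⁻¹ * (Aᴴ * Q₀⁻¹)) := by simp only [Matrix.mul_assoc]
      _ = A * Z := by rw [hZW]
      _ = T := hAZ.symm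
  -- key identity for Q₀⁻¹ ΦAperp
  have hkey : Q₀⁻¹ * ΦAperp = G - s⁻¹ • (G * a * (aᴴ * G)) := by
    rw [hΦAperp, hΦAT, Matrix.mul_sub, Matrix.mul_one, hQT, hGeq]
    abel
  -- determinant computation
  set M : Matrix (Fin m) (Fin m) ℂ := 1 + (α : ℂ) • (G * R₀) with hM
  have hdetM : IsUnit M.det := (Matrix.isUnit_iff_isUnit_det _).mp hinv
  set U : Matrix (Fin m) (Fin 1) ℂ := (-(α * s⁻¹)) • (M⁻¹ * (G * a)) with hU
  set V : Matrix (Fin 1) (Fin m) ℂ := aᴴ * (G * R₀) with hV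
  have hsplit : (1 : Matrix (Fin m) (Fin m) ℂ) + (α : ℂ) • (Q₀⁻¹ * ΦAperp * R₀)
      = M * (1 + U * V) := by
    have lhs_eq : (1 : Matrix (Fin m) (Fin m) ℂ) + (α : ℂ) • (Q₀⁻¹ * ΦAperp * R₀)
        = M + (-((α : ℂ) * s⁻¹)) • (G * a * (aᴴ * (G * R₀))) := by
      have e : (G - s⁻¹ • (G * a * (aᴴ * G))) * R₀
          = G * R₀ - s⁻¹ • (G * a * (aᴴ * (G * R₀))) := by
        rw [Matrix.sub_mul, Matrix.smul_mul]
        simp only [Matrix.mul_assoc]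
      rw [hkey, e, hM, smul_sub, smul_smul, sub_eq_add_neg, ← neg_smul, add_assoc]
    have rhs_eq : M * (1 + U * V) = M + (-((α : ℂ) * s⁻¹)) • (G * a * (aᴴ * (G * R₀))) := by
      rw [Matrix.mul_add, Matrix.mul_one, hU, hV]
      congr 1
      rw [Matrix.smul_mul, Matrix.mul_smul]
      congr 1
      calc M * (M⁻¹ * (G * a) * (aᴴ * (G * R₀)))
          = (M * M⁻¹) * (G * a * (aᴴ * (G * R₀))) := by simp only [Matrix.mul_assoc]
        _ = G * a * (aᴴ * (G * R₀)) := by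
            rw [Matrix.mul_nonsing_inv _ hdetM, Matrix.one_mul]
    exact lhs_eq.trans rhs_eq.symm
  have hdetsmall : (1 + U * V).det = 1 - (α : ℂ) * ((aᴴ * Ψ * a) 0 0) / s := by
    rw [Matrix.det_one_add_mul_comm, Matrix.det_fin_one]
    have hVU : V * U = (-(α * s⁻¹)) • (aᴴ * (G * (R₀ * (M⁻¹ * (G * a))))) := by
      rw [hU, hV, Matrix.mul_smul]
      simp only [Matrix.mul_assoc]
    have hΨa : aᴴ * Ψ * a = aᴴ * (G * (R₀ * (M⁻¹ * (G * a)))) := by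
      rw [hΨ]
      simp only [Matrix.mul_assoc]
    rw [hVU, hΨa]
    simp only [Matrix.add_apply, Matrix.smul_apply, Matrix.one_apply_eq, smul_eq_mul]
    field_simp
    ring
  rw [hsplit, Matrix.det_mul, hdetsmall, hM]
end
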